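/- If U1,...,Up are independent beta random variables with parameters (a_i,b_i) satisfying a_{i+1} = a_i + b_i for i=1,...,p-1, then the product U1·U2···Up is a beta random variable with parameters (a_1, b_1 + b_2 + ... + b_p). -/

import Mathlib

open MeasureTheory ProbabilityTheory Real Filter
open scoped ENNReal NNReal


lemma coe_beta_integrand {a b x : ℝ} (hx0 : 0 ≤ x) (hx1 : 0 ≤ 1 - x) :
    (x:ℂ) ^ ((a:ℂ) - 1) * (1 - (x:ℂ)) ^ ((b:ℂ) - 1) = ((x ^ (a-1) * (1-x) ^ (b-1) : ℝ) : ℂ) := by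
  rw [show ((a:ℂ)-1) = ((a-1:ℝ):ℂ) by push_cast; ring,
      show ((b:ℂ)-1) = ((b-1:ℝ):ℂ) by push_cast; ring,
      show (1-(x:ℂ)) = ((1-x:ℝ):ℂ) by push_cast; ring,
      ← Complex.ofReal_cpow hx0, ← Complex.ofReal_cpow hx1, ← Complex.ofReal_mul]

lemma realBetaIntegral {a b : ℝ} (ha : 0 < a) (hb : 0 < b) :
    ∫ x in (0:ℝ)..1, x ^ (a-1) * (1-x) ^ (b-1) = Gamma a * Gamma b / Gamma (a+b) := by
  have h := Complex.Gamma_mul_Gamma_eq_betaIntegral (s := (a:ℂ)) (t := (b:ℂ)) (by simpa) (by simpa)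
  have hcoe : Complex.betaIntegral a b = ((∫ x in (0:ℝ)..1, x ^ (a-1) * (1-x) ^ (b-1) : ℝ) : ℂ) := by
    rw [Complex.betaIntegral, ← intervalIntegral.integral_ofReal]
    apply intervalIntegral.integral_congr
    intro x hx
    rw [Set.uIcc_of_le (by norm_num : (0:ℝ) ≤ 1)] at hx
    exact coe_beta_integrand hx.1 (by linarith [hx.2])
  rw [hcoe] at h
  have hG : Complex.Gamma ((a:ℂ)+(b:ℂ)) = ((Gamma (a+b) : ℝ) : ℂ) := by
    rw [← Complex.ofReal_add, Complex.Gamma_ofReal]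
  rw [Complex.Gamma_ofReal, Complex.Gamma_ofReal, hG, ← Complex.ofReal_mul, ← Complex.ofReal_mul] at h
  have h2 := Complex.ofReal_injective h
  have hGab : Gamma (a+b) ≠ 0 := (Gamma_pos_of_pos (by linarith)).ne'
  field_simp
  linarith [h2]

lemma intervalIntegrable_beta {a b : ℝ} (ha : 0 < a) (hb : 0 < b) :
    IntervalIntegrable (fun x : ℝ => x ^ (a-1) * (1-x) ^ (b-1)) volume 0 1 := by
  have hg := Complex.betaIntegral_convergent (u := (a:ℂ)) (v := (b:ℂ)) (by simpa) (by simpa)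
  rw [intervalIntegrable_iff_integrableOn_Ioc_of_le (by norm_num : (0:ℝ) ≤ 1)] at hg ⊢
  have hmeas : Measurable (fun x : ℝ => x ^ (a-1) * (1-x) ^ (b-1)) :=
    (measurable_id'.pow_const _).mul ((measurable_const.sub measurable_id').pow_const _)
  have hg' : Integrable (fun x : ℝ => (x:ℂ) ^ ((a:ℂ)-1) * (1-(x:ℂ)) ^ ((b:ℂ)-1))
      (volume.restrict (Set.Ioc (0:ℝ) 1)) := hg
  refine MeasureTheory.Integrable.mono' hg'.norm hmeas.aestronglyMeasurable ?_
  filter_upwards [ae_restrict_mem measurableSet_Ioc] with x hx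
  rw [← Complex.norm_real, ← coe_beta_integrand hx.1.le (by linarith [hx.2])]


/-- The density of a Beta(a,b) random variable on (0,1). -/
noncomputable def betaPDFReal (a b x : ℝ) : ℝ :=
  if 0 < x ∧ x < 1 then
    (Real.Gamma (a + b) / (Real.Gamma a * Real.Gamma b)) * x ^ (a - 1) * (1 - x) ^ (b - 1)
  else 0

/-- The Beta(a,b) probability measure on ℝ. -/
noncomputable def betaMeasure (a b : ℝ) : Measure ℝ :=
  MeasureTheory.volume.withDensity (fun x => ENNReal.ofReal (_root_.betaPDFReal a b x))

lemma betaPDFReal_eq_indicator (a b : ℝ) :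
    _root_.betaPDFReal a b = (Set.Ioo (0:ℝ) 1).indicator
      (fun x => (Gamma (a + b) / (Gamma a * Gamma b)) * (x ^ (a - 1) * (1 - x) ^ (b - 1))) := by
  funext x
  simp only [_root_.betaPDFReal, Set.indicator_apply, Set.mem_Ioo]
  split_ifs with h
  · ring
  · rfl

lemma measurable_betaPDFReal (a b : ℝ) : Measurable (_root_.betaPDFReal a b) := by
  rw [betaPDFReal_eq_indicator]
  exact (((measurable_id'.pow_const _).mul
    ((measurable_const.sub measurable_id').pow_const _)).const_mul _).indicator measurableSet_Ioo


lemma setIntegral_beta {c b : ℝ} (hc : 0 < c) (hb : 0 < b) :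
    ∫ x in Set.Ioo (0:ℝ) 1, x ^ (c-1) * (1-x) ^ (b-1) = Gamma c * Gamma b / Gamma (c+b) := by
  rw [← integral_Ioc_eq_integral_Ioo,
    ← intervalIntegral.integral_of_le (by norm_num : (0:ℝ) ≤ 1)]
  exact realBetaIntegral hc hb

lemma integrableOn_beta_Ioo {c b : ℝ} (hc : 0 < c) (hb : 0 < b) :
    IntegrableOn (fun x : ℝ => x ^ (c-1) * (1-x) ^ (b-1)) (Set.Ioo 0 1) volume :=
  (((intervalIntegrable_iff_integrableOn_Ioc_of_le (by norm_num : (0:ℝ) ≤ 1)).mp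
    (intervalIntegrable_beta hc hb)).mono_set Set.Ioo_subset_Ioc_self)

lemma betaPDFReal_nonneg {a b : ℝ} (ha : 0 < a) (hb : 0 < b) (x : ℝ) :
    0 ≤ _root_.betaPDFReal a b x := by
  rw [_root_.betaPDFReal]
  split_ifs with h
  · have g1 := Real.Gamma_pos_of_pos ha
    have g2 := Real.Gamma_pos_of_pos hb
    have g3 := Real.Gamma_pos_of_pos (show (0:ℝ) < a + b by linarith)
    have h1 : (0:ℝ) ≤ x ^ (a-1) := Real.rpow_nonneg h.1.le _
    have h2 : (0:ℝ) ≤ (1-x) ^ (b-1) := Real.rpow_nonneg (by linarith [h.2]) _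
    positivity
  · exact le_refl 0

lemma integrable_betaPDFReal {a b : ℝ} (ha : 0 < a) (hb : 0 < b) :
    Integrable (_root_.betaPDFReal a b) volume := by
  rw [betaPDFReal_eq_indicator, integrable_indicator_iff measurableSet_Ioo]
  exact (integrableOn_beta_Ioo ha hb).const_mul _

lemma integral_betaPDFReal {a b : ℝ} (ha : 0 < a) (hb : 0 < b) :
    ∫ x, _root_.betaPDFReal a b x = 1 := by
  rw [betaPDFReal_eq_indicator, integral_indicator measurableSet_Ioo, integral_const_mul,
    setIntegral_beta ha hb]
  have h1 : Gamma a ≠ 0 := (Gamma_pos_of_pos ha).ne'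
  have h2 : Gamma b ≠ 0 := (Gamma_pos_of_pos hb).ne'
  have h3 : Gamma (a+b) ≠ 0 := (Gamma_pos_of_pos (by linarith)).ne'
  field_simp

lemma isProbabilityMeasure_betaMeasure {a b : ℝ} (ha : 0 < a) (hb : 0 < b) :
    IsProbabilityMeasure (_root_.betaMeasure a b) := by
  constructor
  rw [_root_.betaMeasure, withDensity_apply _ MeasurableSet.univ, Measure.restrict_univ,
    ← ofReal_integral_eq_lintegral_ofReal (integrable_betaPDFReal ha hb)
      (Filter.Eventually.of_forall (betaPDFReal_nonneg ha hb)),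
    integral_betaPDFReal ha hb, ENNReal.ofReal_one]

lemma betaMeasure_compl_Icc (a b : ℝ) : _root_.betaMeasure a b (Set.Icc 0 1)ᶜ = 0 := by
  rw [_root_.betaMeasure, withDensity_apply _ measurableSet_Icc.compl]
  rw [show (fun x => ENNReal.ofReal (_root_.betaPDFReal a b x)) = fun x => ENNReal.ofReal (_root_.betaPDFReal a b x) from rfl]
  have : ∀ x ∈ (Set.Icc (0:ℝ) 1)ᶜ, ENNReal.ofReal (_root_.betaPDFReal a b x) = 0 := by
    intro x hx
    simp only [Set.mem_compl_iff, Set.mem_Icc, not_and_or, not_le] at hx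
    rw [_root_.betaPDFReal, if_neg, ENNReal.ofReal_zero]
    rintro ⟨h0, h1⟩
    rcases hx with h | h <;> linarith
  rw [setLIntegral_congr_fun measurableSet_Icc.compl this,
    lintegral_zero]

lemma betaMeasure_integral_pow {a b : ℝ} (ha : 0 < a) (hb : 0 < b) (n : ℕ) :
    ∫ x, x ^ n ∂(_root_.betaMeasure a b)
      = Gamma (a+b) * Gamma (a+n) / (Gamma a * Gamma (a+b+n)) := by
  have hmeas : Measurable (fun x : ℝ => (_root_.betaPDFReal a b x).toNNReal) :=
    (_root_.measurable_betaPDFReal a b).real_toNNReal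
  have key : _root_.betaMeasure a b
      = volume.withDensity (fun x => ((_root_.betaPDFReal a b x).toNNReal : ℝ≥0∞)) := rfl
  rw [key, integral_withDensity_eq_integral_smul hmeas]
  have h1 : (fun x : ℝ => (_root_.betaPDFReal a b x).toNNReal • x ^ n)
      = (Set.Ioo (0:ℝ) 1).indicator (fun x =>
          (Gamma (a + b) / (Gamma a * Gamma b)) * (x ^ ((a+n) - 1) * (1 - x) ^ (b - 1))) := by
    funext x
    simp only [NNReal.smul_def, smul_eq_mul]
    rw [Real.coe_toNNReal _ (betaPDFReal_nonneg ha hb x),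
      betaPDFReal_eq_indicator]
    by_cases hx : x ∈ Set.Ioo (0:ℝ) 1
    · rw [Set.indicator_of_mem hx, Set.indicator_of_mem hx,
        ← Real.rpow_natCast x n, show a + (n:ℝ) - 1 = (a-1) + n by ring,
        Real.rpow_add hx.1]
      ring
    · simp [Set.indicator_of_notMem hx]

  rw [h1, integral_indicator measurableSet_Ioo, integral_const_mul,
    setIntegral_beta (by positivity : (0:ℝ) < a + n) hb]
  have g1 : Gamma a ≠ 0 := (Gamma_pos_of_pos ha).ne'
  have g2 : Gamma b ≠ 0 := (Gamma_pos_of_pos hb).ne'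
  have g3 : Gamma (a+b+n) ≠ 0 := (Gamma_pos_of_pos (by positivity)).ne'
  have g4 : Gamma (a+n+b) = Gamma (a+b+n) := by ring_nf
  rw [g4]
  field_simp

/-- `X` is a beta random variable with parameters `(a, b)` on `(Ω, μ)`. -/
def HasBetaLaw {Ω : Type*} [MeasurableSpace Ω] (μ : Measure Ω) (X : Ω → ℝ) (a b : ℝ) : Prop :=
  Measurable X ∧ μ.map X = _root_.betaMeasure a b


lemma integral_continuous_eq_of_moments (μ ν : Measure ℝ)
    [IsProbabilityMeasure μ] [IsProbabilityMeasure ν]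
    (hμr : μ.restrict (Set.Icc 0 1) = μ) (hνr : ν.restrict (Set.Icc 0 1) = ν)
    (h : ∀ n : ℕ, ∫ x, x ^ n ∂μ = ∫ x, x ^ n ∂ν)
    {g : ℝ → ℝ} (hg : Continuous g) : ∫ x, g x ∂μ = ∫ x, g x ∂ν := by
  -- integrals of polynomials agree
  have hpow : ∀ (κ : Measure ℝ), IsProbabilityMeasure κ → ∀ (q : Polynomial ℝ),
      ∫ x in Set.Icc (0:ℝ) 1, q.eval x ∂κ = ∑ i ∈ Finset.range (q.natDegree + 1),
        q.coeff i * ∫ x in Set.Icc (0:ℝ) 1, x ^ i ∂κ := by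
    intro κ hκp q
    haveI := hκp
    have hint : ∀ i : ℕ, IntegrableOn (fun x : ℝ => x ^ i) (Set.Icc (0:ℝ) 1) κ := by
      intro i
      exact (continuous_pow i).continuousOn.integrableOn_compact isCompact_Icc
    calc ∫ x in Set.Icc (0:ℝ) 1, q.eval x ∂κ
        = ∫ x in Set.Icc (0:ℝ) 1, ∑ i ∈ Finset.range (q.natDegree + 1),
            q.coeff i * x ^ i ∂κ := by
          apply setIntegral_congr_fun measurableSet_Icc
          intro x _
          exact q.eval_eq_sum_range x
      _ = ∑ i ∈ Finset.range (q.natDegree + 1), q.coeff i * ∫ x in Set.Icc (0:ℝ) 1, x ^ i ∂κ := by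
          rw [integral_finset_sum]
          · exact Finset.sum_congr rfl fun i _ => by rw [integral_const_mul]
          · exact fun i _ => (hint i).const_mul _
  have key : ∀ ε > (0:ℝ), |∫ x, g x ∂μ - ∫ x, g x ∂ν| ≤ 2 * ε := by
    intro ε hε
    -- Stone-Weierstrass
    obtain ⟨q, hq⟩ : ∃ q : Polynomial ℝ, ∀ x ∈ Set.Icc (0:ℝ) 1, |g x - q.eval x| ≤ ε := by
      let G : C(Set.Icc (0:ℝ) 1, ℝ) := ContinuousMap.restrict _ ⟨g, hg⟩
      have hGmem : G ∈ closure ((polynomialFunctions (Set.Icc (0:ℝ) 1)) : Set C(Set.Icc (0:ℝ) 1, ℝ)) := by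
        rw [← Subalgebra.topologicalClosure_coe, polynomialFunctions_closure_eq_top]
        trivial
      rw [Metric.mem_closure_iff] at hGmem
      obtain ⟨P, hPmem, hPd⟩ := hGmem ε hε
      rw [polynomialFunctions_coe] at hPmem
      obtain ⟨q, rfl⟩ := hPmem
      refine ⟨q, fun x hx => ?_⟩
      have := ContinuousMap.dist_apply_le_dist (f := G) (g := Polynomial.toContinuousMapOnAlgHom _ q) ⟨x, hx⟩
      rw [Real.dist_eq] at this
      have hGx : G ⟨x, hx⟩ = g x := rfl
      have hPx : (Polynomial.toContinuousMapOnAlgHom _ q) ⟨x, hx⟩ = q.eval x := rfl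
      rw [hGx, hPx] at this
      exact this.trans (le_of_lt hPd)
    have hIg : ∀ (κ : Measure ℝ), IsProbabilityMeasure κ →
        IntegrableOn g (Set.Icc (0:ℝ) 1) κ ∧ IntegrableOn (fun x => q.eval x) (Set.Icc (0:ℝ) 1) κ := by
      intro κ hκp
      haveI := hκp
      exact ⟨hg.continuousOn.integrableOn_compact isCompact_Icc,
        (q.continuous).continuousOn.integrableOn_compact isCompact_Icc⟩
    have hm : ∀ i : ℕ, ∫ x in Set.Icc (0:ℝ) 1, x ^ i ∂μ = ∫ x in Set.Icc (0:ℝ) 1, x ^ i ∂ν := by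
      intro i
      have h1 : ∫ x in Set.Icc (0:ℝ) 1, x ^ i ∂μ = ∫ x, x ^ i ∂μ := by
        conv_rhs => rw [← hμr]
      have h2 : ∫ x in Set.Icc (0:ℝ) 1, x ^ i ∂ν = ∫ x, x ^ i ∂ν := by
        conv_rhs => rw [← hνr]
      rw [h1, h2, h i]
    have hq_eq : ∫ x in Set.Icc (0:ℝ) 1, q.eval x ∂μ = ∫ x in Set.Icc (0:ℝ) 1, q.eval x ∂ν := by
      rw [hpow μ inferInstance q, hpow ν inferInstance q]
      exact Finset.sum_congr rfl fun i _ => by rw [hm i]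
    have bound : ∀ (κ : Measure ℝ) (hκp : IsProbabilityMeasure κ),
        |∫ x in Set.Icc (0:ℝ) 1, g x ∂κ - ∫ x in Set.Icc (0:ℝ) 1, q.eval x ∂κ| ≤ ε := by
      intro κ hκp
      haveI := hκp
      rw [← integral_sub (hIg κ hκp).1 (hIg κ hκp).2]
      have hb := norm_setIntegral_le_of_norm_le_const (μ := κ) (s := Set.Icc (0:ℝ) 1)
        (f := fun x => g x - q.eval x) (C := ε) (measure_lt_top κ _)
        (fun x hx => by rw [Real.norm_eq_abs]; exact hq x hx)
      refine hb.trans ?_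
      have h1 : κ.real (Set.Icc (0:ℝ) 1) ≤ 1 := by
        have h2 := prob_le_one (μ := κ) (s := Set.Icc (0:ℝ) 1)
        exact ENNReal.toReal_le_of_le_ofReal (by norm_num) (by simpa using h2)
      nlinarith
    have e1 : ∫ x, g x ∂μ = ∫ x in Set.Icc (0:ℝ) 1, g x ∂μ := by conv_lhs => rw [← hμr]
    have e2 : ∫ x, g x ∂ν = ∫ x in Set.Icc (0:ℝ) 1, g x ∂ν := by conv_lhs => rw [← hνr]
    rw [e1, e2]
    have b1 := bound μ inferInstance
    have b2 := bound ν inferInstance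
    set A := ∫ x in Set.Icc (0:ℝ) 1, g x ∂μ
    set B := ∫ x in Set.Icc (0:ℝ) 1, q.eval x ∂μ
    set A' := ∫ x in Set.Icc (0:ℝ) 1, g x ∂ν
    set B' := ∫ x in Set.Icc (0:ℝ) 1, q.eval x ∂ν
    have hBB' : B = B' := hq_eq
    have hsplit : A - A' = (A - B) + (B' - A') := by rw [hBB']; ring
    rw [hsplit]
    calc |(A - B) + (B' - A')| ≤ |A - B| + |B' - A'| := abs_add_le _ _
      _ ≤ ε + ε := add_le_add b1 (by rw [abs_sub_comm]; exact b2)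
      _ = 2 * ε := by ring
  -- conclude
  by_contra hne
  have hpos : 0 < |∫ x, g x ∂μ - ∫ x, g x ∂ν| := by
    rw [abs_pos, sub_ne_zero]
    exact hne
  have := key (|∫ x, g x ∂μ - ∫ x, g x ∂ν| / 4) (by linarith)
  linarith


lemma ext_of_moments (μ ν : Measure ℝ)
    [IsProbabilityMeasure μ] [IsProbabilityMeasure ν]
    (hμ : μ (Set.Icc 0 1)ᶜ = 0) (hν : ν (Set.Icc 0 1)ᶜ = 0)
    (h : ∀ n : ℕ, ∫ x, x ^ n ∂μ = ∫ x, x ^ n ∂ν) : μ = ν := by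
  have hμr : μ.restrict (Set.Icc 0 1) = μ :=
    Measure.restrict_eq_self_of_ae_mem (MeasureTheory.ae_iff.mpr hμ)
  have hνr : ν.restrict (Set.Icc 0 1) = ν :=
    Measure.restrict_eq_self_of_ae_mem (MeasureTheory.ae_iff.mpr hν)
  apply ext_of_forall_lintegral_eq_of_IsFiniteMeasure
  intro f
  have hint := integral_continuous_eq_of_moments μ ν hμr hνr h
    (g := fun x => (f x : ℝ)) (NNReal.continuous_coe.comp f.continuous)
  have h1 := BoundedContinuousFunction.toReal_lintegral_coe_eq_integral f μ
  have h2 := BoundedContinuousFunction.toReal_lintegral_coe_eq_integral f ν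
  have fin1 : ∫⁻ x, (f x : ℝ≥0∞) ∂μ ≠ ⊤ :=
    (BoundedContinuousFunction.lintegral_lt_top_of_nnreal μ f).ne
  have fin2 : ∫⁻ x, (f x : ℝ≥0∞) ∂ν ≠ ⊤ :=
    (BoundedContinuousFunction.lintegral_lt_top_of_nnreal ν f).ne
  rw [← ENNReal.toReal_eq_toReal_iff' fin1 fin2, h1, h2]
  exact hint

lemma integral_finset_prod_of_indep {Ω : Type*} [MeasurableSpace Ω] (μ : Measure Ω)
    [IsProbabilityMeasure μ] {ι : Type*} (V : ι → Ω → ℝ) (hV : ∀ i, Measurable (V i))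
    (hind : iIndepFun V μ) (s : Finset ι) :
    ∫ ω, ∏ i ∈ s, V i ω ∂μ = ∏ i ∈ s, ∫ ω, V i ω ∂μ := by
  classical
  induction s using Finset.induction_on with
  | empty => simp
  | @insert i s his ih =>
    rw [Finset.prod_insert his, ← ih]
    have hid : IndepFun (∏ j ∈ s, V j) (V i) μ :=
      hind.indepFun_finsetProd_of_notMem hV his
    have hpm : Measurable (∏ j ∈ s, V j) := by
      rw [Finset.prod_fn]
      exact Finset.measurable_prod s fun j _ => hV j
    have hmul := hid.symm.integral_fun_mul_eq_mul_integral ((hV i).aestronglyMeasurable)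
      (hpm.aestronglyMeasurable)
    calc ∫ ω, ∏ j ∈ insert i s, V j ω ∂μ
        = ∫ ω, V i ω * (∏ j ∈ s, V j) ω ∂μ := by
          congr 1; funext ω; rw [Finset.prod_insert his, Finset.prod_apply]
      _ = (∫ ω, V i ω ∂μ) * ∫ ω, (∏ j ∈ s, V j) ω ∂μ := hmul
      _ = (∫ ω, V i ω ∂μ) * ∫ ω, ∏ j ∈ s, V j ω ∂μ := by
          congr 1; apply integral_congr_ae; filter_upwards with ω; rw [Finset.prod_apply]

lemma prod_range_div_telescope (f : ℕ → ℝ) (hf : ∀ k, f k ≠ 0) (p : ℕ) :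
    ∏ k ∈ Finset.range p, f (k+1) / f k = f p / f 0 := by
  induction p with
  | zero => simp [div_self (hf 0)]
  | succ n ih =>
    rw [Finset.prod_range_succ, ih]
    field_simp [hf]

theorem beta_product_rule_general {Ω : Type*} [MeasurableSpace Ω] (μ : Measure Ω)
    [IsProbabilityMeasure μ] (p : ℕ) (hp : 0 < p) (U : Fin p → Ω → ℝ) (a b : Fin p → ℝ)
    (ha : ∀ i, 0 < a i) (hb : ∀ i, 0 < b i)
    (hlaw : ∀ i, HasBetaLaw μ (U i) (a i) (b i))
    (hind : iIndepFun U μ)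
    (hchain : ∀ i : Fin p, ∀ h : i.val + 1 < p, a ⟨i.val + 1, h⟩ = a i + b i) :
    HasBetaLaw μ (fun ω => ∏ i, U i ω) (a ⟨0, hp⟩) (∑ i, b i) := by
  classical
  set a0 : ℝ := a ⟨0, hp⟩ with ha0def
  set S : ℝ := ∑ i, b i with hSdef
  have hS0 : 0 < S := Finset.sum_pos (fun i _ => hb i) ⟨⟨0, hp⟩, Finset.mem_univ _⟩
  have hX : Measurable (fun ω => ∏ i, U i ω) :=
    Finset.measurable_prod _ fun i _ => (hlaw i).1
  -- the factors live in [0,1] a.s.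
  have hae : ∀ i, ∀ᵐ ω ∂μ, U i ω ∈ Set.Icc (0:ℝ) 1 := by
    intro i
    have h0 : μ ((U i) ⁻¹' (Set.Icc (0:ℝ) 1)ᶜ) = 0 := by
      rw [← Measure.map_apply (hlaw i).1 measurableSet_Icc.compl, (hlaw i).2]
      exact betaMeasure_compl_Icc _ _
    rw [ae_iff]
    exact h0
  have haeX : ∀ᵐ ω ∂μ, (∏ i, U i ω) ∈ Set.Icc (0:ℝ) 1 := by
    filter_upwards [(ae_all_iff).mpr hae] with ω hω
    exact ⟨Finset.prod_nonneg fun i _ => (hω i).1,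
      Finset.prod_le_one (fun i _ => (hω i).1) (fun i _ => (hω i).2)⟩
  -- the telescoping sequence
  set B : ℕ → ℝ := fun j => if h : j < p then b ⟨j, h⟩ else 0 with hBdef
  set A : ℕ → ℝ := fun k => a0 + ∑ j ∈ Finset.range k, B j with hAdef
  have hBnn : ∀ j, 0 ≤ B j := by
    intro j
    rw [hBdef]
    dsimp only
    split_ifs with h
    · exact (hb _).le
    · exact le_refl 0
  have hA0 : A 0 = a0 := by simp [hAdef]
  have hApos : ∀ k, 0 < A k :=
    fun k => add_pos_of_pos_of_nonneg (ha _) (Finset.sum_nonneg fun j _ => hBnn j)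
  have hAsucc : ∀ k, A (k+1) = A k + B k := by
    intro k
    simp [hAdef, Finset.sum_range_succ]
    ring
  have hAa : ∀ k, ∀ h : k < p, A k = a ⟨k, h⟩ := by
    intro k
    induction k with
    | zero =>
      intro h
      rw [hA0, ha0def]
    | succ k ih =>
      intro h
      have hk : k < p := Nat.lt_of_succ_lt h
      have hBk : B k = b ⟨k, hk⟩ := dif_pos hk
      rw [hAsucc k, ih hk, hBk, ← hchain ⟨k, hk⟩ h]
  have hstep : ∀ i : Fin p, A (i.val + 1) = a i + b i := by
    intro i
    have hBk : B i.val = b i := by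
      rw [hBdef]
      dsimp only
      rw [dif_pos i.isLt]
    rw [hAsucc, hAa i.val i.isLt, hBk]
  have hAp : A p = a0 + S := by
    rw [hAdef]
    dsimp only
    congr 1
    rw [hSdef, ← Fin.sum_univ_eq_sum_range (fun j => B j) p]
    refine (Finset.sum_congr rfl fun i _ => ?_).symm
    rw [hBdef]
    dsimp only
    rw [dif_pos i.isLt]
  -- moments agree
  have hmoment : ∀ n : ℕ, ∫ x, x ^ n ∂(μ.map (fun ω => ∏ i, U i ω))
      = ∫ x, x ^ n ∂(_root_.betaMeasure a0 S) := by
    intro n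
    set f : ℕ → ℝ := fun k => Gamma (A k) / Gamma (A k + n) with hfdef
    have hfne : ∀ k, f k ≠ 0 := by
      intro k
      rw [hfdef]
      dsimp only
      exact div_ne_zero (Gamma_pos_of_pos (hApos k)).ne'
        (Gamma_pos_of_pos (by have := hApos k; positivity)).ne'
    have hVmeas : ∀ i, Measurable (fun ω => (U i ω) ^ n) :=
      fun i => (hlaw i).1.pow_const n
    have hVind : iIndepFun (fun i ω => (U i ω) ^ n) μ :=
      hind.comp (fun _ (x : ℝ) => x ^ n) (fun _ => measurable_id.pow_const n)
    calc ∫ x, x ^ n ∂(μ.map (fun ω => ∏ i, U i ω))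
        = ∫ ω, (∏ i, U i ω) ^ n ∂μ :=
          integral_map hX.aemeasurable (continuous_pow n).aestronglyMeasurable
      _ = ∫ ω, ∏ i, (U i ω) ^ n ∂μ := by
          congr 1
          funext ω
          rw [Finset.prod_pow]
      _ = ∏ i, ∫ ω, (U i ω) ^ n ∂μ :=
          integral_finset_prod_of_indep μ _ hVmeas hVind Finset.univ
      _ = ∏ i : Fin p, f (i.val + 1) / f i.val := by
          refine Finset.prod_congr rfl fun i _ => ?_
          have h1 : ∫ ω, (U i ω) ^ n ∂μ = ∫ x, x ^ n ∂(_root_.betaMeasure (a i) (b i)) := by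
            rw [← (hlaw i).2,
              integral_map (hlaw i).1.aemeasurable (continuous_pow n).aestronglyMeasurable]
          rw [h1, betaMeasure_integral_pow (ha i) (hb i) n, hfdef]
          dsimp only
          rw [← hstep i, ← hAa i.val i.isLt]
          have g1 : Gamma (A i.val) ≠ 0 := (Gamma_pos_of_pos (hApos _)).ne'
          have g2 : Gamma (A (i.val+1)) ≠ 0 := (Gamma_pos_of_pos (hApos _)).ne'
          have g3 : Gamma (A i.val + n) ≠ 0 :=
            (Gamma_pos_of_pos (by have := hApos i.val; positivity)).ne'
          have g4 : Gamma (A (i.val+1) + n) ≠ 0 :=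
            (Gamma_pos_of_pos (by have := hApos (i.val+1); positivity)).ne'
          field_simp
      _ = ∏ k ∈ Finset.range p, f (k + 1) / f k :=
          Fin.prod_univ_eq_prod_range (fun k => f (k+1) / f k) p
      _ = f p / f 0 := prod_range_div_telescope f hfne p
      _ = ∫ x, x ^ n ∂(_root_.betaMeasure a0 S) := by
          rw [betaMeasure_integral_pow (show (0:ℝ) < a0 from ha _) hS0 n, hfdef]
          dsimp only
          rw [hAp, hA0]
          have ha0 : (0:ℝ) < a0 := ha _
          have g1 : Gamma a0 ≠ 0 := (Gamma_pos_of_pos ha0).ne'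
          have g2 : Gamma (a0 + S) ≠ 0 := (Gamma_pos_of_pos (by linarith)).ne'
          have g3 : Gamma (a0 + n) ≠ 0 :=
            (Gamma_pos_of_pos (by positivity)).ne'
          have g4 : Gamma (a0 + S + n) ≠ 0 :=
            (Gamma_pos_of_pos (by positivity)).ne'
          field_simp
  refine ⟨hX, ?_⟩
  haveI h1 : IsProbabilityMeasure (μ.map (fun ω => ∏ i, U i ω)) :=
    Measure.isProbabilityMeasure_map hX.aemeasurable
  haveI h2 : IsProbabilityMeasure (_root_.betaMeasure a0 S) :=
    isProbabilityMeasure_betaMeasure (ha _) hS0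
  refine ext_of_moments _ _ ?_ (betaMeasure_compl_Icc _ _) hmoment
  rw [Measure.map_apply hX measurableSet_Icc.compl]
  rw [ae_iff] at haeX
  exact haeX
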